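/- For m, n ∈ ℕ with m ≥ 3 odd, the map ι_n : ZMod m × {±1}^(n−1) → 2^((ZMod m)^n) given by ι_n(q, ε_1, …, ε_{n−1}) := {v ∈ (ZMod m)^n : v_1 + Σ_{i=1}^{n−1} ε_i v_{i+1} ∈ {q, q+2, …, q+m−3} (mod m)} is injective, and every set in its image is a maximum independent set of the discrete torus Z_m^n (i.e., an independent set of the maximum possible cardinality). -/

import Mathlib

/-- The discrete torus `Z_m^n`: the graph on `(ZMod m)^n` where two vertices are adjacent
iff they differ by `±1 (mod m)` in exactly one coordinate. -/
def torus (m n : ℕ) : SimpleGraph (Fin n → ZMod m) :=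
  SimpleGraph.fromRel fun u v =>
    ∃ j : Fin n, (u j = v j + 1 ∨ u j = v j - 1) ∧ ∀ i : Fin n, i ≠ j → u i = v i

/-- A set of vertices is independent if its vertices are pairwise non-adjacent. -/
def IsIndep {V : Type*} (G : SimpleGraph V) (s : Set V) : Prop :=
  s.Pairwise fun u v => ¬ G.Adj u v

/-- `N_G(X) := (⋃ x ∈ X, N_G(x)) \ X`. -/
def nbhd {V : Type*} (G : SimpleGraph V) (X : Set V) : Set V :=
  (⋃ x ∈ X, G.neighborSet x) \ X

/-- `N_G(X, Y) := N_G(X) ∩ Y`. -/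
def nbhdIn {V : Type*} (G : SimpleGraph V) (X Y : Set V) : Set V :=
  nbhd G X ∩ Y

/-- `E_m^n(p)`: the vertices of `Z_m^n` whose coordinate sum is `p` modulo `m`. -/
def Eclass (m n : ℕ) (p : ZMod m) : Set (Fin n → ZMod m) :=
  {v | ∑ i, v i = p}

/-- A maximum independent set: an independent set of the largest possible cardinality. -/
def MaxIndep {V : Type*} (G : SimpleGraph V) (s : Set V) : Prop :=
  IsIndep G s ∧ ∀ t : Set V, IsIndep G t → t.ncard ≤ s.ncard

/-- The map `ι_n`: `ι_n(q, ε₁, …, ε_{n−1})` is the set of vertices `v` of `Z_m^n` with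
`v₁ + Σ_{i=1}^{n-1} ε_i v_{i+1} ∈ {q, q+2, …, q+m−3} (mod m)` (for odd `m`, this set of
residues is `{q + 2j : 0 ≤ j < ⌊m/2⌋}`). -/
def iota (m n : ℕ) (q : ZMod m) (ε : Fin (n - 1) → ℤˣ) : Set (Fin n → ZMod m) :=
  {v | ∃ j : ℕ, j < m / 2 ∧
    (∑ i : Fin n, (if _h : i.1 = 0 then (1 : ZMod m)
        else (((ε ⟨i.1 - 1, by have := i.isLt; omega⟩ : ℤˣ) : ℤ) : ZMod m)) * v i)
      = q + 2 * (j : ZMod m)}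


def coef (m n : ℕ) (ε : Fin (n - 1) → ℤˣ) (i : Fin n) : ZMod m :=
  if _h : i.1 = 0 then (1 : ZMod m)
  else (((ε ⟨i.1 - 1, by have := i.isLt; omega⟩ : ℤˣ) : ℤ) : ZMod m)

def fval (m n : ℕ) (ε : Fin (n - 1) → ℤˣ) (v : Fin n → ZMod m) : ZMod m :=
  ∑ i, coef m n ε i * v i

/-- membership in iota via fval -/
lemma mem_iota {m n : ℕ} {q : ZMod m} {ε : Fin (n-1) → ℤˣ} {v : Fin n → ZMod m} :
    v ∈ iota m n q ε ↔ ∃ j : ℕ, j < m / 2 ∧ fval m n ε v = q + 2 * (j : ZMod m) := Iff.rfl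

lemma not_cast_zero {m : ℕ} (hm : 3 ≤ m) {z : ℤ} (h1 : z ≠ 0) (h2 : |z| < m)
    (hz : (z : ZMod m) = 0) : False := by
  rw [ZMod.intCast_zmod_eq_zero_iff_dvd] at hz
  have h3 : (m : ℤ) ∣ |z| := (dvd_abs _ _).mpr hz
  have := Int.le_of_dvd (abs_pos.mpr h1) h3
  omega

lemma coef_zero {m n : ℕ} (hn : 1 ≤ n) (ε : Fin (n-1) → ℤˣ) :
    coef m n ε ⟨0, hn⟩ = 1 := by simp [coef]

lemma coef_pm {m n : ℕ} (ε : Fin (n-1) → ℤˣ) (i : Fin n) :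
    ∃ a : ℤ, (a = 1 ∨ a = -1) ∧ coef m n ε i = (a : ZMod m) := by
  unfold coef
  split_ifs with h
  · exact ⟨1, Or.inl rfl, by norm_num⟩
  · refine ⟨((ε ⟨i.1 - 1, by have := i.isLt; omega⟩ : ℤˣ) : ℤ), ?_, rfl⟩
    exact Int.isUnit_iff.mp (Units.isUnit _)
lemma cycle_indep {m : ℕ} (hm : 3 ≤ m) (hmo : Odd m) [NeZero m] (X : Finset (ZMod m))
    (hX : ∀ x ∈ X, x + 1 ∉ X) : X.card ≤ m / 2 := by
  have hdisj : Disjoint X (X.image (· + 1)) := by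
    rw [Finset.disjoint_right]
    intro y hy hyX
    obtain ⟨x, hx, rfl⟩ := Finset.mem_image.mp hy
    exact hX x hx hyX
  have hcard : (X ∪ X.image (· + 1)).card = 2 * X.card := by
    rw [Finset.card_union_of_disjoint hdisj,
      Finset.card_image_of_injective _ (add_left_injective 1)]
    ring
  have hle : (X ∪ X.image (· + 1)).card ≤ m := by
    have := Finset.card_le_univ (X ∪ X.image (· + 1))
    simpa [ZMod.card] using this
  obtain ⟨l, hl⟩ := hmo
  omega

lemma fiber_card {m n : ℕ} [NeZero m] (hn : 1 ≤ n) (i0 : Fin n)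
    (h : (Fin n → ZMod m) → ZMod m)
    (hh : ∀ (v : Fin n → ZMod m) (x : ZMod m),
      h (fun i => if i = i0 then v i + x else v i) = h v + x) (x : ZMod m) :
    (Finset.univ.filter fun v => h v = x).card = m ^ (n - 1) := by
  classical
  have hconst : ∀ y z : ZMod m,
      (Finset.univ.filter fun v => h v = y).card
        = (Finset.univ.filter fun v => h v = z).card := by
    intro y z
    apply Finset.card_nbij' (fun v => fun i => if i = i0 then v i + (z - y) else v i)
      (fun v => fun i => if i = i0 then v i + (y - z) else v i)
    · intro v hv
      simp only [Finset.mem_coe, Finset.mem_filter, Finset.mem_univ, true_and] at hv ⊢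
      rw [hh, hv]; ring
    · intro v hv
      simp only [Finset.mem_coe, Finset.mem_filter, Finset.mem_univ, true_and] at hv ⊢
      rw [hh, hv]; ring
    · intro v _; funext i; by_cases hi : i = i0 <;> simp [hi] <;> ring
    · intro v _; funext i; by_cases hi : i = i0 <;> simp [hi] <;> ring
  have hsum : ∑ y : ZMod m, (Finset.univ.filter fun v => h v = y).card
      = m ^ n := by
    rw [← Finset.card_eq_sum_card_fiberwise (fun v _ => Finset.mem_univ (h v))]
    simp [ZMod.card]
  have : ∀ y ∈ (Finset.univ : Finset (ZMod m)),
      (Finset.univ.filter fun v => h v = y).card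
        = (Finset.univ.filter fun v => h v = x).card := fun y _ => hconst y x
  rw [Finset.sum_congr rfl this, Finset.sum_const, Finset.card_univ, ZMod.card, smul_eq_mul] at hsum
  have hmpos : 0 < m := NeZero.pos m
  have hpow : m ^ n = m * m ^ (n - 1) := by
    conv_lhs => rw [show n = (n-1) + 1 by omega]
    ring
  rw [hpow] at hsum
  exact Nat.eq_of_mul_eq_mul_left hmpos hsum
lemma fval_update {m n : ℕ} (hn : 1 ≤ n) (ε : Fin (n-1) → ℤˣ) (v : Fin n → ZMod m)
    (x : ZMod m) :
    fval m n ε (fun i => if i = ⟨0, hn⟩ then v i + x else v i) = fval m n ε v + x := by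
  unfold fval
  have : ∀ i ∈ Finset.univ,
      coef m n ε i * (if i = ⟨0, hn⟩ then v i + x else v i)
        = coef m n ε i * v i + (if i = ⟨0, hn⟩ then x else 0) := by
    intro i _
    by_cases hi : i = (⟨0, hn⟩ : Fin n)
    · subst hi; rw [if_pos rfl, if_pos rfl, coef_zero]; ring
    · simp [hi]
  rw [Finset.sum_congr rfl this, Finset.sum_add_distrib, Finset.sum_ite_eq' Finset.univ]
  simp

lemma fval_single {m n : ℕ} (hn : 1 ≤ n) (ε : Fin (n-1) → ℤˣ) (x : ZMod m) :
    fval m n ε (fun t => if t = ⟨0, hn⟩ then x else 0) = x := by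
  unfold fval
  have : ∀ t ∈ Finset.univ,
      coef m n ε t * (if t = ⟨0, hn⟩ then x else 0)
        = if t = ⟨0, hn⟩ then x else 0 := by
    intro t _
    by_cases ht : t = (⟨0, hn⟩ : Fin n)
    · subst ht; simp [coef_zero]
    · simp [ht]
  rw [Finset.sum_congr rfl this, Finset.sum_ite_eq' Finset.univ]
  simp

lemma fval_vtx {m n : ℕ} (hn : 1 ≤ n) (ε : Fin (n-1) → ℤˣ) (p : Fin n)
    (hp : p ≠ ⟨0, hn⟩) (x y : ZMod m) :
    fval m n ε (fun t => if t = ⟨0, hn⟩ then x else if t = p then y else 0)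
      = x + coef m n ε p * y := by
  unfold fval
  have : ∀ t ∈ Finset.univ,
      coef m n ε t * (if t = ⟨0, hn⟩ then x else if t = p then y else 0)
        = (if t = ⟨0, hn⟩ then x else 0) + (if t = p then coef m n ε p * y else 0) := by
    intro t _
    by_cases ht : t = (⟨0, hn⟩ : Fin n)
    · subst ht; rw [if_pos rfl, if_pos rfl, if_neg (Ne.symm hp), coef_zero]; ring
    · by_cases ht2 : t = p
      · subst ht2; simp [ht]
      · simp [ht, ht2]
  rw [Finset.sum_congr rfl this, Finset.sum_add_distrib,
    Finset.sum_ite_eq' Finset.univ, Finset.sum_ite_eq' Finset.univ]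
  simp


lemma rel_fval {m n : ℕ} (ε : Fin (n-1) → ℤˣ) {u v : Fin n → ZMod m}
    (h : ∃ j : Fin n, (u j = v j + 1 ∨ u j = v j - 1) ∧ ∀ i : Fin n, i ≠ j → u i = v i) :
    ∃ e : ℤ, (e = 1 ∨ e = -1) ∧ fval m n ε u = fval m n ε v + (e : ZMod m) := by
  obtain ⟨j, hj, hoth⟩ := h
  obtain ⟨a, ha, hca⟩ := coef_pm (m := m) ε j
  have hsub : fval m n ε u - fval m n ε v = coef m n ε j * (u j - v j) := by
    unfold fval
    rw [← Finset.sum_sub_distrib]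
    rw [Finset.sum_eq_single_of_mem j (Finset.mem_univ j)]
    · ring
    · intro i _ hij
      rw [hoth i hij]; ring
  rcases hj with hj | hj
  · refine ⟨a, ha, ?_⟩
    have : u j - v j = 1 := by rw [hj]; ring
    rw [this, mul_one, hca] at hsub
    linear_combination hsub
  · refine ⟨-a, by omega, ?_⟩
    have : u j - v j = -1 := by rw [hj]; ring
    rw [this, hca] at hsub
    push_cast
    linear_combination hsub

lemma adj_fval {m n : ℕ} (ε : Fin (n-1) → ℤˣ) {u v : Fin n → ZMod m}
    (h : (torus m n).Adj u v) :
    ∃ e : ℤ, (e = 1 ∨ e = -1) ∧ fval m n ε u = fval m n ε v + (e : ZMod m) := by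
  rw [torus, SimpleGraph.fromRel_adj] at h
  obtain ⟨-, h | h⟩ := h
  · exact rel_fval ε h
  · obtain ⟨e, he, heq⟩ := rel_fval ε h
    refine ⟨-e, by omega, ?_⟩
    push_cast
    linear_combination -heq

lemma iota_indep {m n : ℕ} (hm : 3 ≤ m) (hmo : Odd m) (q : ZMod m) (ε : Fin (n-1) → ℤˣ) :
    IsIndep (torus m n) (iota m n q ε) := by
  intro u hu v hv _ hadj
  obtain ⟨j1, hj1, hf1⟩ := mem_iota.mp hu
  obtain ⟨j2, hj2, hf2⟩ := mem_iota.mp hv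
  obtain ⟨e, he, heq⟩ := adj_fval ε hadj
  rw [hf1, hf2] at heq
  have hz : ((2 * (j1:ℤ) - 2 * (j2:ℤ) - e : ℤ) : ZMod m) = 0 := by
    push_cast
    linear_combination heq
  obtain ⟨l, hl⟩ := hmo
  refine not_cast_zero hm ?_ ?_ hz
  · rcases he with rfl | rfl <;> omega
  · rw [abs_lt]
    rcases he with rfl | rfl <;> constructor <;> push_cast <;> omega

lemma fval_fiber_card {m n : ℕ} [NeZero m] (hn : 1 ≤ n) (ε : Fin (n-1) → ℤˣ) (x : ZMod m) :
    (Finset.univ.filter fun v => fval m n ε v = x).card = m ^ (n - 1) :=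
  fiber_card hn ⟨0, hn⟩ _ (fval_update hn ε) x

lemma iota_ncard {m n : ℕ} [NeZero m] (hm : 3 ≤ m) (hmo : Odd m) (hn : 1 ≤ n)
    (q : ZMod m) (ε : Fin (n-1) → ℤˣ) :
    (iota m n q ε).ncard = m / 2 * m ^ (n - 1) := by
  classical
  have hfin : (iota m n q ε).Finite := Set.toFinite _
  rw [Set.ncard_eq_toFinset_card _ hfin]
  set A := hfin.toFinset with hA
  set Sq : Finset (ZMod m) := (Finset.range (m / 2)).image (fun j : ℕ => q + 2 * (j : ZMod m))
    with hSq
  have hmemA : ∀ v, v ∈ A ↔ ∃ j : ℕ, j < m / 2 ∧ fval m n ε v = q + 2 * (j : ZMod m) := by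
    intro v; rw [hA, Set.Finite.mem_toFinset]; exact mem_iota
  have hmap : ∀ v ∈ A, fval m n ε v ∈ Sq := by
    intro v hv
    obtain ⟨j, hj, hf⟩ := (hmemA v).mp hv
    exact Finset.mem_image.mpr ⟨j, Finset.mem_range.mpr hj, hf.symm⟩
  rw [Finset.card_eq_sum_card_fiberwise hmap]
  have hfib : ∀ x ∈ Sq, (A.filter fun v => fval m n ε v = x).card = m ^ (n - 1) := by
    intro x hx
    obtain ⟨j, hj, rfl⟩ := Finset.mem_image.mp hx
    rw [Finset.mem_range] at hj
    have : A.filter (fun v => fval m n ε v = q + 2 * (j : ZMod m))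
        = Finset.univ.filter (fun v => fval m n ε v = q + 2 * (j : ZMod m)) := by
      ext v
      simp only [Finset.mem_filter, Finset.mem_univ, true_and, and_iff_right_iff_imp]
      intro hf
      exact (hmemA v).mpr ⟨j, hj, hf⟩
    rw [this, fval_fiber_card hn]
  rw [Finset.sum_congr rfl hfib, Finset.sum_const, smul_eq_mul]
  congr 1
  rw [hSq, Finset.card_image_of_injOn, Finset.card_range]
  intro j hj j' hj' hjj
  rw [Finset.mem_coe, Finset.mem_range] at hj hj'
  by_contra hne
  have hz : ((2 * (j:ℤ) - 2 * (j':ℤ) : ℤ) : ZMod m) = 0 := by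
    push_cast
    linear_combination hjj
  obtain ⟨l, hl⟩ := hmo
  refine not_cast_zero hm ?_ ?_ hz
  · omega
  · rw [abs_lt]; constructor <;> push_cast <;> omega

lemma indep_le {m n : ℕ} [NeZero m] (hm : 3 ≤ m) (hmo : Odd m) (hn : 1 ≤ n)
    (t : Set (Fin n → ZMod m)) (ht : IsIndep (torus m n) t) :
    t.ncard ≤ m / 2 * m ^ (n - 1) := by
  classical
  set z0 : Fin n := ⟨0, hn⟩ with hz0
  have hfin : t.Finite := Set.toFinite t
  rw [Set.ncard_eq_toFinset_card _ hfin]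
  set T := hfin.toFinset with hT
  set g : (Fin n → ZMod m) → (Fin n → ZMod m) := fun v i => if i = z0 then 0 else v i with hg
  have hmap : ∀ v ∈ T, g v ∈ T.image g := fun v hv => Finset.mem_image_of_mem g hv
  rw [Finset.card_eq_sum_card_fiberwise hmap]
  have hfib : ∀ w ∈ T.image g, (T.filter fun v => g v = w).card ≤ m / 2 := by
    intro w _
    set F := T.filter fun v => g v = w with hF
    have hinj : Set.InjOn (fun v : Fin n → ZMod m => v z0) (F : Set (Fin n → ZMod m)) := by
      intro u hu v hv huv
      rw [Finset.mem_coe, hF, Finset.mem_filter] at hu hv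
      funext i
      by_cases hi : i = z0
      · rw [hi]; exact huv
      · have h1 : g u i = g v i := by rw [hu.2, hv.2]
        simpa [hg, hi] using h1
    rw [← Finset.card_image_of_injOn hinj]
    apply cycle_indep hm hmo
    intro x hx hx1
    obtain ⟨u, hu, hux⟩ := Finset.mem_image.mp hx
    obtain ⟨v, hv, hvx⟩ := Finset.mem_image.mp hx1
    rw [hF, Finset.mem_filter] at hu hv
    have hut : u ∈ t := (Set.Finite.mem_toFinset hfin).mp hu.1
    have hvt : v ∈ t := (Set.Finite.mem_toFinset hfin).mp hv.1
    have hne : v ≠ u := by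
      intro h
      rw [h, hux] at hvx
      have : ((1 : ℤ) : ZMod m) = 0 := by push_cast; linear_combination -hvx
      exact not_cast_zero hm one_ne_zero (by rw [abs_one]; exact_mod_cast by omega) this
    refine ht hvt hut hne ?_
    rw [torus, SimpleGraph.fromRel_adj]
    refine ⟨hne, Or.inl ⟨z0, Or.inl (by rw [hvx, hux]), ?_⟩⟩
    intro i hi
    have h1 : g v i = g u i := by rw [hu.2, hv.2]
    simpa [hg, hi] using h1
  calc ∑ w ∈ T.image g, (T.filter fun v => g v = w).card
      ≤ ∑ w ∈ T.image g, m / 2 := Finset.sum_le_sum hfib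
    _ = (T.image g).card * (m / 2) := by rw [Finset.sum_const, smul_eq_mul]
    _ ≤ m ^ (n - 1) * (m / 2) := by
        gcongr
        have hsub : T.image g ⊆ Finset.univ.filter fun w => w z0 = 0 := by
          intro w hw
          obtain ⟨v, _, rfl⟩ := Finset.mem_image.mp hw
          simp [hg]
        have := Finset.card_le_card hsub
        rwa [fiber_card hn z0 (fun w => w z0) (by intro v x; simp) 0] at this
    _ = m / 2 * m ^ (n - 1) := Nat.mul_comm _ _

lemma Pq_self {m : ℕ} (hm : 3 ≤ m) (q : ZMod m) :
    ∃ j : ℕ, j < m / 2 ∧ q = q + 2 * (j : ZMod m) :=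
  ⟨0, by omega, by push_cast; ring⟩

lemma not_Pq_sub2 {m : ℕ} (hm : 3 ≤ m) (hmo : Odd m) (q : ZMod m) :
    ¬ ∃ j : ℕ, j < m / 2 ∧ q - 2 = q + 2 * (j : ZMod m) := by
  rintro ⟨j, hj, he⟩
  have hz : ((2 * (j:ℤ) + 2 : ℤ) : ZMod m) = 0 := by
    push_cast
    linear_combination -he
  obtain ⟨l, hl⟩ := hmo
  refine not_cast_zero hm (by omega) ?_ hz
  rw [abs_lt]; constructor <;> push_cast <;> omega

lemma iota_inj {m n : ℕ} (hm : 3 ≤ m) (hmo : Odd m) (hn : 1 ≤ n) :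
    Function.Injective (fun x : ZMod m × (Fin (n - 1) → ℤˣ) => iota m n x.1 x.2) := by
  rintro ⟨q, ε⟩ ⟨q', ε'⟩ h
  simp only at h
  have key : ∀ v : Fin n → ZMod m,
      (∃ j : ℕ, j < m / 2 ∧ fval m n ε v = q + 2 * (j : ZMod m)) ↔
      (∃ j : ℕ, j < m / 2 ∧ fval m n ε' v = q' + 2 * (j : ZMod m)) := by
    intro v
    rw [← mem_iota, ← mem_iota, h]
  have hee : ε = ε' := by
    by_contra hne
    obtain ⟨i, hi⟩ := Function.ne_iff.mp hne
    have hn2 : i.1 + 1 < n := by have := i.isLt; omega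
    set p : Fin n := ⟨i.1 + 1, hn2⟩ with hpdef
    have hp : p ≠ ⟨0, hn⟩ := by simp [hpdef, Fin.ext_iff]
    have hcp : coef m n ε p = ((ε i : ℤ) : ZMod m) := by
      simp [coef, hpdef]
    have hcp' : coef m n ε' p = ((ε' i : ℤ) : ZMod m) := by
      simp [coef, hpdef]
    have he' : ((ε' i : ℤ) : ZMod m) = -((ε i : ℤ) : ZMod m) := by
      rcases Int.units_eq_one_or (ε i) with h1 | h1 <;>
        rcases Int.units_eq_one_or (ε' i) with h2 | h2 <;>
          first
            | (rw [h1, h2]; push_cast; ring1)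
            | (exact absurd (by rw [h1, h2]) hi)
    have hu2 : IsUnit (2 : ZMod m) := by
      have h22 : ((2:ℕ) : ZMod m) = 2 := by push_cast; rfl
      rw [← h22, ZMod.isUnit_iff_coprime]
      exact Nat.coprime_two_left.mpr hmo
    have h2 : (2 : ZMod m) * (2 : ZMod m)⁻¹ = 1 := ZMod.mul_inv_of_unit _ hu2
    set i2 := (2 : ZMod m)⁻¹
    set e := ((ε i : ℤ) : ZMod m) with hedef
    have he2 : e * e = 1 := by
      rcases Int.units_eq_one_or (ε i) with h1 | h1 <;> rw [hedef, h1] <;> push_cast <;> ring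
    have main : ∀ a b : ZMod m,
        (∃ j : ℕ, j < m / 2 ∧ a = q + 2 * (j : ZMod m)) ↔
        (∃ j : ℕ, j < m / 2 ∧ b = q' + 2 * (j : ZMod m)) := by
      intro a b
      set x := (a + b) * i2 with hx
      set y := e * ((a - b) * i2) with hy
      have hv := key (fun t => if t = ⟨0, hn⟩ then x else if t = p then y else 0)
      rw [fval_vtx hn ε p hp, fval_vtx hn ε' p hp, hcp, hcp', he'] at hv
      have ha : x + e * y = a := by
        rw [hx, hy]
        linear_combination ((a - b) * i2) * he2 + a * h2
      have hb : x + -e * y = b := by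
        rw [hx, hy]
        linear_combination (-(a - b) * i2) * he2 + b * h2
      rw [ha, hb] at hv
      exact hv
    exact not_Pq_sub2 hm hmo q' ((main q (q' - 2)).mp (Pq_self hm q))
  subst hee
  have hq : q = q' := by
    have key1 : ∀ x : ZMod m,
        (∃ j : ℕ, j < m / 2 ∧ x = q + 2 * (j : ZMod m)) ↔
        (∃ j : ℕ, j < m / 2 ∧ x = q' + 2 * (j : ZMod m)) := by
      intro x
      have hv := key (fun t => if t = ⟨0, hn⟩ then x else 0)
      rwa [fval_single hn] at hv
    obtain ⟨j0, hj0, hqq⟩ := (key1 q).mp (Pq_self hm q)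
    rcases Nat.eq_zero_or_pos j0 with rfl | hpos
    · simpa using hqq
    · exfalso
      refine not_Pq_sub2 hm hmo q ((key1 (q - 2)).mpr ⟨j0 - 1, by omega, ?_⟩)
      have hc : ((j0 - 1 : ℕ) : ZMod m) = (j0 : ZMod m) - 1 := by
        push_cast [Nat.cast_sub hpos]
        ring
      rw [hc]
      linear_combination hqq
  simp [hq]

/-- For `m ≥ 3` odd, the map `ι_n` is injective and every set in its image is a
maximum independent set of `Z_m^n`. -/
theorem stmt_4 (m n : ℕ) (hm : 3 ≤ m) (hmo : Odd m) (hn : 1 ≤ n) :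
    Function.Injective (fun x : ZMod m × (Fin (n - 1) → ℤˣ) => iota m n x.1 x.2) ∧
    ∀ (q : ZMod m) (ε : Fin (n - 1) → ℤˣ), MaxIndep (torus m n) (iota m n q ε) := by
  haveI : NeZero m := ⟨by omega⟩
  refine ⟨iota_inj hm hmo hn, fun q ε => ⟨iota_indep hm hmo q ε, fun t ht => ?_⟩⟩
  rw [iota_ncard hm hmo hn q ε]
  exact indep_le hm hmo hn t ht
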